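/- arXiv:2404.02954 — 6 statements merged into one kernel-verified Lean document; each statement's English description precedes it below -/
import Mathlib

section
/- Let D ≥ 1 and let M ⊆ ℝ^D be a Borel set whose closure cl(M) satisfies λ_D(cl(M)) = 0. Let ℙ† be a Borel probability measure on ℝ^D with ℙ†(M) = 1 and supp(ℙ†) = cl(M). Let (ℙ_t)_{t=1}^∞ be Borel probability measures on ℝ^D with ℙ_t ≪ λ_D, with densities p_t, such that ℙ_t converges weakly to ℙ† as t → ∞. Then liminf_{t→∞} p_t(x) = 0 for λ_D-almost every x ∈ ℝ^D ∖ cl(M). (Likelihood Instability Theorem, first part.) -/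
open MeasureTheory Filter Topology
open scoped ENNReal

/-- The support of a Borel probability measure: the intersection of all closed sets of
full measure. -/
def msupport {E : Type*} [TopologicalSpace E] [MeasurableSpace E]
    (μ : MeasureTheory.Measure E) : Set E :=
  ⋂₀ {C : Set E | IsClosed C ∧ μ C = 1}

/-- **Likelihood Instability Theorem, first part.** If Borel probability measures `P t`
with densities `p t` with respect to Lebesgue measure converge weakly to a probability
measure `Pdag` with `Pdag M = 1` and `supp Pdag = closure M`, where `closure M` is
Lebesgue-null, then `liminf_t p t x = 0` for Lebesgue-almost every `x` outside
`closure M`. -/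
theorem likelihood_instability_first_part
    {D : ℕ} (hD : 1 ≤ D)
    (M : Set (EuclideanSpace ℝ (Fin D))) (hM : MeasurableSet M)
    (hMnull : volume (closure M) = 0)
    (Pdag : Measure (EuclideanSpace ℝ (Fin D))) [IsProbabilityMeasure Pdag]
    (hPdagM : Pdag M = 1)
    (hsupp : msupport Pdag = closure M)
    (P : ℕ → Measure (EuclideanSpace ℝ (Fin D)))
    (hPprob : ∀ t, IsProbabilityMeasure (P t))
    (hPac : ∀ t, P t ≪ volume)
    (p : ℕ → EuclideanSpace ℝ (Fin D) → ℝ)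
    (hp_nonneg : ∀ t x, 0 ≤ p t x)
    (hp_meas : ∀ t, Measurable (p t))
    (hp_density : ∀ t, ∀ A : Set (EuclideanSpace ℝ (Fin D)), MeasurableSet A →
        P t A = ∫⁻ x in A, ENNReal.ofReal (p t x) ∂volume)
    (hweak : ∀ h : BoundedContinuousFunction (EuclideanSpace ℝ (Fin D)) ℝ,
        Tendsto (fun t => ∫ x, h x ∂(P t)) atTop (𝓝 (∫ x, h x ∂Pdag))) :
    ∀ᵐ x ∂volume, x ∉ closure M → liminf (fun t => p t x) atTop = 0 := by
  classical
  -- M is nonempty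
  have hMne : M.Nonempty := by
    rcases Set.eq_empty_or_nonempty M with h | h
    · exfalso; rw [h] at hPdagM; simp at hPdagM
    · exact h
  have hclne : (closure M).Nonempty := hMne.closure
  -- Pdag gives zero mass outside closure M
  have hPdagCl : Pdag (closure M) = 1 := le_antisymm prob_le_one
    (hPdagM ▸ measure_mono subset_closure)
  have hPdagCompl : Pdag ((closure M)ᶜ) = 0 := by
    have := prob_compl_eq_zero_iff (μ := Pdag) (isClosed_closure (s := M)).measurableSet
    exact this.mpr hPdagCl
  -- Weak convergence as ProbabilityMeasure convergence
  letI : ∀ t, IsProbabilityMeasure (P t) := hPprob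
  set μs : ℕ → ProbabilityMeasure (EuclideanSpace ℝ (Fin D)) :=
    fun t => ⟨P t, hPprob t⟩ with hμs
  set μ : ProbabilityMeasure (EuclideanSpace ℝ (Fin D)) := ⟨Pdag, ‹_›⟩ with hμ
  have hconv : Tendsto μs atTop (𝓝 μ) := by
    rw [ProbabilityMeasure.tendsto_iff_forall_integral_tendsto]
    exact hweak
  -- For each n, the closed set K n
  set K : ℕ → Set (EuclideanSpace ℝ (Fin D)) :=
    fun n => {x | (1 : ℝ) / (n + 1) ≤ Metric.infDist x (closure M)} ∩ Metric.closedBall 0 n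
    with hK
  have hKclosed : ∀ n, IsClosed (K n) := by
    intro n
    exact (isClosed_le continuous_const (Metric.continuous_infDist_pt _)).inter
      Metric.isClosed_closedBall
  have hKdisj : ∀ n, Pdag (K n) = 0 := by
    intro n
    refine measure_mono_null ?_ hPdagCompl
    intro x hx hxM
    have h0 : Metric.infDist x (closure M) = 0 := by
      simpa using Metric.infDist_zero_of_mem hxM
    have h1 : (1 : ℝ) / (n + 1) ≤ Metric.infDist x (closure M) := hx.1
    rw [h0] at h1
    have hp1 : (0 : ℝ) < 1 / (n + 1) := by positivity
    linarith
  -- For each n, limsup of P t (K n) is 0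
  have hlimsup : ∀ n, limsup (fun t => P t (K n)) atTop ≤ 0 := by
    intro n
    have := ProbabilityMeasure.limsup_measure_closed_le_of_tendsto hconv (hKclosed n)
    simpa [hμs, hμ, hKdisj n] using this
  -- liminf of densities vanishes a.e. on each K n
  have hae : ∀ n, ∀ᵐ x ∂(volume.restrict (K n)),
      liminf (fun t => ENNReal.ofReal (p t x)) atTop = 0 := by
    intro n
    have hmeasK : MeasurableSet (K n) := (hKclosed n).measurableSet
    have hint : ∫⁻ x in K n, liminf (fun t => ENNReal.ofReal (p t x)) atTop ∂volume = 0 := by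
      have h1 : ∫⁻ x in K n, liminf (fun t => ENNReal.ofReal (p t x)) atTop ∂volume
          ≤ liminf (fun t => ∫⁻ x in K n, ENNReal.ofReal (p t x) ∂volume) atTop :=
        lintegral_liminf_le (fun t => (hp_meas t).ennreal_ofReal)
      have h2 : (fun t => ∫⁻ x in K n, ENNReal.ofReal (p t x) ∂volume)
          = fun t => P t (K n) := by
        funext t; exact (hp_density t (K n) hmeasK).symm
      rw [h2] at h1
      have h3 : liminf (fun t => P t (K n)) atTop ≤ limsup (fun t => P t (K n)) atTop :=
        liminf_le_limsup
      exact le_antisymm (h1.trans (h3.trans (hlimsup n))) zero_le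
    have hmf : Measurable fun x => liminf (fun t => ENNReal.ofReal (p t x)) atTop :=
      Measurable.liminf (fun t => (hp_meas t).ennreal_ofReal)
    have := (lintegral_eq_zero_iff hmf).mp hint
    filter_upwards [this] with x hx using hx
  -- combine to full measure restricted to complement of closure M
  have haeAll : ∀ᵐ x ∂volume, ∀ n, x ∈ K n →
      liminf (fun t => ENNReal.ofReal (p t x)) atTop = 0 := by
    rw [MeasureTheory.ae_all_iff]
    intro n
    have := hae n
    rw [MeasureTheory.ae_restrict_iff' (hKclosed n).measurableSet] at this
    exact this
  filter_upwards [haeAll] with x hx hxM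
  -- find n with x ∈ K n
  have hpos : 0 < Metric.infDist x (closure M) :=
    (isClosed_closure.notMem_iff_infDist_pos hclne).mp hxM
  obtain ⟨n1, hn1⟩ := exists_nat_one_div_lt hpos
  obtain ⟨n2, hn2⟩ := exists_nat_ge ‖x‖
  have hxK : x ∈ K (max n1 n2) := by
    constructor
    · calc (1 : ℝ) / (↑(max n1 n2) + 1) ≤ 1 / (↑n1 + 1) := by
            apply one_div_le_one_div_of_le
            · positivity
            · have : (n1 : ℝ) ≤ (max n1 n2 : ℕ) := by exact_mod_cast le_max_left n1 n2
              linarith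
        _ ≤ Metric.infDist x (closure M) := hn1.le
    · simp only [Metric.mem_closedBall, dist_zero_right]
      have : (n2 : ℝ) ≤ (max n1 n2 : ℕ) := by exact_mod_cast le_max_right n1 n2
      linarith
  have hE : liminf (fun t => ENNReal.ofReal (p t x)) atTop = 0 := hx _ hxK
  -- deduce the real liminf is 0
  have hfreq : ∀ ε : ℝ, 0 < ε → ∃ᶠ t in atTop, p t x < ε := by
    intro ε hε
    by_contra hcon
    rw [Filter.not_frequently] at hcon
    have hev : ∀ᶠ t in atTop, ENNReal.ofReal ε ≤ ENNReal.ofReal (p t x) := by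
      filter_upwards [hcon] with t ht
      exact ENNReal.ofReal_le_ofReal (not_lt.mp ht)
    have : ENNReal.ofReal ε ≤ liminf (fun t => ENNReal.ofReal (p t x)) atTop :=
      le_liminf_of_le (by isBoundedDefault) hev
    rw [hE] at this
    have h0 : ENNReal.ofReal ε = 0 := le_antisymm this zero_le
    rw [ENNReal.ofReal_eq_zero] at h0
    linarith
  have hS : ∀ a : ℝ, (∀ᶠ t in atTop, a ≤ p t x) → a ≤ 0 := by
    intro a ha
    by_contra hcon
    push_neg at hcon
    rcases ((hfreq a hcon).and_eventually ha).exists with ⟨t, h1, h2⟩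
    linarith
  rw [liminf_eq]
  apply le_antisymm
  · exact csSup_le ⟨0, Filter.Eventually.of_forall (fun t => hp_nonneg t x)⟩ hS
  · exact le_csSup ⟨0, hS⟩ (Filter.Eventually.of_forall (fun t => hp_nonneg t x))
end

section
/- Let D ≥ 1 and let M ⊆ ℝ^D be a Borel set whose closure cl(M) satisfies λ_D(cl(M)) = 0. Let ℙ† be a Borel probability measure on ℝ^D with ℙ†(M) = 1 and supp(ℙ†) = cl(M). Let (ℙ_t)_{t=1}^∞ be Borel probability measures on ℝ^D with ℙ_t ≪ λ_D, with densities p_t, such that ℙ_t converges weakly to ℙ† as t → ∞. Then for every x ∈ cl(M) and every ε > 0, sup_{x' ∈ B_ε(x)} p_t(x') → ∞ as t → ∞. (Likelihood Instability Theorem, second part.) -/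
open MeasureTheory Filter Topology
open scoped ENNReal

/-- **Likelihood Instability Theorem, second part.** If Borel probability measures `P t`
with densities `p t` with respect to Lebesgue measure converge weakly to a probability
measure `Pdag` with `Pdag M = 1` and `supp Pdag = closure M`, where `closure M` is
Lebesgue-null, then for every `x ∈ closure M` and every `ε > 0`, the supremum of
`p t` over the ball `B ε x` tends to infinity as `t → ∞`. -/
theorem likelihood_instability_second_part
    {D : ℕ} (hD : 1 ≤ D)
    (M : Set (EuclideanSpace ℝ (Fin D))) (hM : MeasurableSet M)
    (hMnull : volume (closure M) = 0)
    (Pdag : Measure (EuclideanSpace ℝ (Fin D))) [IsProbabilityMeasure Pdag]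
    (hPdagM : Pdag M = 1)
    (hsupp : msupport Pdag = closure M)
    (P : ℕ → Measure (EuclideanSpace ℝ (Fin D)))
    (hPprob : ∀ t, IsProbabilityMeasure (P t))
    (hPac : ∀ t, P t ≪ volume)
    (p : ℕ → EuclideanSpace ℝ (Fin D) → ℝ)
    (hp_nonneg : ∀ t x, 0 ≤ p t x)
    (hp_meas : ∀ t, Measurable (p t))
    (hp_density : ∀ t, ∀ A : Set (EuclideanSpace ℝ (Fin D)), MeasurableSet A →
        P t A = ∫⁻ x in A, ENNReal.ofReal (p t x) ∂volume)
    (hweak : ∀ h : BoundedContinuousFunction (EuclideanSpace ℝ (Fin D)) ℝ,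
        Tendsto (fun t => ∫ x, h x ∂(P t)) atTop (𝓝 (∫ x, h x ∂Pdag))) :
    ∀ x ∈ closure M, ∀ ε : ℝ, 0 < ε →
      Tendsto (fun t => ⨆ x' ∈ Metric.ball x ε, ENNReal.ofReal (p t x'))
        atTop (𝓝 (⊤ : ℝ≥0∞)) := by
  intro x hx ε hε
  -- the small ball has positive Pdag-measure, since x is in the support
  have hballpos : 0 < Pdag (Metric.ball x (ε / 2)) := by
    by_contra h
    push_neg at h
    have h0 : Pdag (Metric.ball x (ε / 2)) = 0 := le_antisymm h zero_le
    have hC1 : Pdag (Metric.ball x (ε / 2))ᶜ = 1 := by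
      rw [measure_compl measurableSet_ball (measure_ne_top _ _), h0, measure_univ]
      simp
    have hxsupp : x ∈ msupport Pdag := hsupp ▸ hx
    have hxC : x ∈ (Metric.ball x (ε / 2))ᶜ :=
      hxsupp _ ⟨Metric.isOpen_ball.isClosed_compl, hC1⟩
    exact hxC (Metric.mem_ball_self (by linarith))
  set c0 : ℝ := (Pdag (Metric.ball x (ε / 2))).toReal with hc0def
  have hc0 : 0 < c0 := ENNReal.toReal_pos hballpos.ne' (measure_ne_top _ _)
  -- closure M has full Pdag-measure
  have hclM1 : Pdag (closure M) = 1 :=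
    le_antisymm prob_le_one (hPdagM ▸ measure_mono subset_closure)
  have hclMc : Pdag (closure M)ᶜ = 0 := by
    rw [measure_compl (isClosed_closure.measurableSet) (measure_ne_top _ _), hclM1,
      measure_univ, tsub_self]
  rw [ENNReal.tendsto_nhds_top_iff_nat]
  intro n
  -- pick a small thickening of closure M with small volume
  set s : ℕ → Set (EuclideanSpace ℝ (Fin D)) := fun k =>
    Metric.thickening (1 / (k + 1)) (closure M) ∩ Metric.closedBall x ε with hsdef
  have hsmeas : ∀ k, NullMeasurableSet (s k) volume := fun k =>
    ((Metric.isOpen_thickening.measurableSet.inter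
      measurableSet_closedBall)).nullMeasurableSet
  have hanti : Antitone s := by
    intro k m hkm
    refine Set.inter_subset_inter_left _ (Metric.thickening_mono ?_ _)
    have h1 : (0:ℝ) < k + 1 := by positivity
    have h2 : (k:ℝ) + 1 ≤ (m:ℝ) + 1 := by exact_mod_cast by omega
    exact one_div_le_one_div_of_le h1 h2
  have hfin : ∃ k, volume (s k) ≠ ∞ := by
    refine ⟨0, ?_⟩
    exact ((measure_mono (Set.inter_subset_right)).trans_lt
      (MeasureTheory.measure_closedBall_lt_top)).ne
  have hInt0 : volume (⋂ k, s k) = 0 := by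
    refine measure_mono_null ?_ hMnull
    intro y hy
    simp only [Set.mem_iInter] at hy
    have hy' : ∀ k : ℕ, EMetric.infEdist y (closure M) < ENNReal.ofReal (1 / (k + 1)) := by
      intro k
      exact Metric.mem_thickening_iff_infEdist_lt.mp (hy k).1
    have hne : EMetric.infEdist y (closure M) ≠ ∞ := ((hy' 0).trans_le le_top).ne
    have h0 : EMetric.infEdist y (closure M) = 0 := by
      by_contra hne0
      have hpos : 0 < (EMetric.infEdist y (closure M)).toReal :=
        ENNReal.toReal_pos hne0 hne
      obtain ⟨k, hk⟩ := exists_nat_one_div_lt hpos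
      have := (ENNReal.lt_ofReal_iff_toReal_lt hne).mp (hy' k)
      linarith
    have : y ∈ closure (closure M) := EMetric.mem_closure_iff_infEdist_zero.mpr h0
    rwa [closure_closure] at this
  have hlim := tendsto_measure_iInter_atTop hsmeas hanti hfin
  rw [hInt0] at hlim
  -- the target small volume
  set η : ℝ≥0∞ := ENNReal.ofReal (c0 / 2) / (n + 1) with hηdef
  have hη0 : 0 < η := by
    apply ENNReal.div_pos
    · simp [ENNReal.ofReal_pos]; linarith
    · simp
  obtain ⟨k, hk⟩ := (hlim.eventually_lt_const hη0).exists
  set δ : ℝ := 1 / (k + 1) with hδdef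
  have hδ : 0 < δ := by positivity
  set V : Set (EuclideanSpace ℝ (Fin D)) :=
    Metric.thickening δ (closure M) ∩ Metric.ball x ε with hVdef
  have hVmeas : MeasurableSet V :=
    Metric.isOpen_thickening.measurableSet.inter Metric.isOpen_ball.measurableSet
  have hVsub : V ⊆ s k :=
    Set.inter_subset_inter_right _ Metric.ball_subset_closedBall
  have hVvol : volume V < η := (measure_mono hVsub).trans_lt hk
  -- construct the bump function
  set F : EuclideanSpace ℝ (Fin D) → ℝ := fun y =>
    max 0 (min 1 (3 - (4 / ε) * dist y x)) * max 0 (1 - Metric.infDist y (closure M) / δ)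
    with hFdef
  have hFa01 : ∀ y, 0 ≤ max 0 (min 1 (3 - (4 / ε) * dist y x)) ∧
      max 0 (min 1 (3 - (4 / ε) * dist y x)) ≤ 1 :=
    fun y => ⟨le_max_left _ _, max_le zero_le_one ((min_le_left _ _))⟩
  have hFb01 : ∀ y, 0 ≤ max 0 (1 - Metric.infDist y (closure M) / δ) ∧
      max 0 (1 - Metric.infDist y (closure M) / δ) ≤ 1 := by
    intro y
    refine ⟨le_max_left _ _, max_le zero_le_one ?_⟩
    have h1 : 0 ≤ Metric.infDist y (closure M) := Metric.infDist_nonneg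
    have : 0 ≤ Metric.infDist y (closure M) / δ := by positivity
    linarith
  have hF01 : ∀ y, 0 ≤ F y ∧ F y ≤ 1 := by
    intro y
    exact ⟨mul_nonneg (hFa01 y).1 (hFb01 y).1,
      mul_le_one₀ (hFa01 y).2 (hFb01 y).1 (hFb01 y).2⟩
  have hFcont : Continuous F := by
    apply Continuous.mul
    · exact continuous_const.max (continuous_const.min (continuous_const.sub
        (continuous_const.mul (continuous_id.dist continuous_const))))
    · exact continuous_const.max (continuous_const.sub
        ((Metric.continuous_infDist_pt (closure M)).div_const δ))
  have hFbd : ∀ y, ‖F y‖ ≤ 1 := by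
    intro y
    rw [Real.norm_eq_abs, abs_le]
    exact ⟨by linarith [(hF01 y).1], (hF01 y).2⟩
  set f : BoundedContinuousFunction (EuclideanSpace ℝ (Fin D)) ℝ :=
    BoundedContinuousFunction.ofNormedAddCommGroup F hFcont 1 hFbd with hfdef
  have hfcoe : ∀ y, f y = F y := fun y => rfl
  -- F = 1 on closure M ∩ closedBall x (ε/2)
  have hF1 : ∀ y ∈ closure M ∩ Metric.closedBall x (ε / 2), F y = 1 := by
    rintro y ⟨hyM, hyB⟩
    have hdist : dist y x ≤ ε / 2 := Metric.mem_closedBall.mp hyB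
    have ha : max 0 (min 1 (3 - (4 / ε) * dist y x)) = 1 := by
      have h1 : (4 / ε) * dist y x ≤ 2 := by
        have h4 : 0 < 4 / ε := by positivity
        calc (4 / ε) * dist y x ≤ (4 / ε) * (ε / 2) := by
              exact mul_le_mul_of_nonneg_left hdist h4.le
          _ = 2 := by field_simp; ring
      have : (1:ℝ) ≤ 3 - (4 / ε) * dist y x := by linarith
      rw [min_eq_left this, max_eq_right zero_le_one]
    have hb : max 0 (1 - Metric.infDist y (closure M) / δ) = 1 := by
      rw [Metric.infDist_zero_of_mem hyM]
      norm_num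
    rw [hFdef]; dsimp only; rw [ha, hb, one_mul]
  -- F = 0 outside V
  have hF0 : ∀ y, y ∉ V → F y = 0 := by
    intro y hy
    rw [hVdef, Set.mem_inter_iff, not_and_or] at hy
    rcases hy with hy | hy
    · have hinf : δ ≤ Metric.infDist y (closure M) := by
        by_contra hlt
        push_neg at hlt
        exact hy ((Metric.mem_thickening_iff_infDist_lt ⟨x, hx⟩).mpr hlt)
      have hb : max 0 (1 - Metric.infDist y (closure M) / δ) = 0 := by
        apply max_eq_left
        have : 1 ≤ Metric.infDist y (closure M) / δ := (one_le_div hδ).mpr hinf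
        linarith
      rw [hFdef]; dsimp only; rw [hb, mul_zero]
    · have hdist : ε ≤ dist y x := by
        simpa [Metric.mem_ball] using hy
      have ha : max 0 (min 1 (3 - (4 / ε) * dist y x)) = 0 := by
        apply max_eq_left
        have h4 : (4:ℝ) ≤ (4 / ε) * dist y x := by
          have h4' : 0 < 4 / ε := by positivity
          calc (4:ℝ) = (4 / ε) * ε := by field_simp
            _ ≤ (4 / ε) * dist y x := mul_le_mul_of_nonneg_left hdist h4'.le
        have : 3 - (4 / ε) * dist y x ≤ -1 := by linarith
        exact (min_le_right _ _).trans (by linarith)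
      rw [hFdef]; dsimp only; rw [ha, zero_mul]
  -- lower bound on ∫ F dPdag
  have hintPdag : c0 ≤ ∫ y, f y ∂Pdag := by
    have hind : (closure M ∩ Metric.closedBall x (ε / 2)).indicator
        (fun _ => (1:ℝ)) ≤ fun y => f y := by
      intro y
      show (closure M ∩ Metric.closedBall x (ε / 2)).indicator (fun _ => (1:ℝ)) y ≤ F y
      by_cases hy : y ∈ closure M ∩ Metric.closedBall x (ε / 2)
      · rw [Set.indicator_of_mem hy, hF1 y hy]
      · rw [Set.indicator_of_notMem hy]
        exact (hF01 y).1
    have hmeasAB : MeasurableSet (closure M ∩ Metric.closedBall x (ε / 2)) :=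
      isClosed_closure.measurableSet.inter measurableSet_closedBall
    have h1 : ∫ y, (closure M ∩ Metric.closedBall x (ε / 2)).indicator
        (fun _ => (1:ℝ)) y ∂Pdag
        = (Pdag (closure M ∩ Metric.closedBall x (ε / 2))).toReal := by
      rw [integral_indicator_const (1:ℝ) hmeasAB]; simp [measureReal_def]
    have h2 : Pdag (closure M ∩ Metric.closedBall x (ε / 2))
        = Pdag (Metric.closedBall x (ε / 2)) := by
      rw [Set.inter_comm]
      exact measure_inter_conull hclMc
    have h3 : c0 ≤ (Pdag (closure M ∩ Metric.closedBall x (ε / 2))).toReal := by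
      rw [h2, hc0def]
      exact ENNReal.toReal_mono (measure_ne_top _ _)
        (measure_mono (Metric.ball_subset_closedBall.trans (by norm_num)))
    calc c0 ≤ ∫ y, (closure M ∩ Metric.closedBall x (ε / 2)).indicator
          (fun _ => (1:ℝ)) y ∂Pdag := h1 ▸ h3
      _ ≤ ∫ y, f y ∂Pdag := by
          apply integral_mono _ (f.integrable Pdag) hind
          exact (integrable_const (1:ℝ)).indicator hmeasAB
  -- eventually the integral against P t is at least c0/2
  have hev : ∀ᶠ t in atTop, c0 / 2 < ∫ y, f y ∂(P t) :=
    (hweak f).eventually_const_lt (by linarith)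
  filter_upwards [hev] with t ht
  have := hPprob t
  -- ∫ f dP t ≤ (P t V).toReal
  have hintV : ∫ y, f y ∂(P t) ≤ (P t V).toReal := by
    have hind : (fun y => f y) ≤ V.indicator (fun _ => (1:ℝ)) := by
      intro y
      show F y ≤ V.indicator (fun _ => (1:ℝ)) y
      by_cases hy : y ∈ V
      · rw [Set.indicator_of_mem hy]
        exact (hF01 y).2
      · rw [Set.indicator_of_notMem hy, hF0 y hy]
    calc ∫ y, f y ∂(P t) ≤ ∫ y, V.indicator (fun _ => (1:ℝ)) y ∂(P t) := by
          apply integral_mono (f.integrable (P t)) _ hind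
          exact (integrable_const (1:ℝ)).indicator hVmeas
      _ = (P t V).toReal := by rw [integral_indicator_const (1:ℝ) hVmeas]; simp [measureReal_def]
  have hPtV : ENNReal.ofReal (c0 / 2) ≤ P t V := by
    have h1 : c0 / 2 ≤ (P t V).toReal := le_of_lt (lt_of_lt_of_le ht hintV)
    calc ENNReal.ofReal (c0 / 2) ≤ ENNReal.ofReal (P t V).toReal :=
          ENNReal.ofReal_le_ofReal h1
      _ = P t V := ENNReal.ofReal_toReal (measure_ne_top _ _)
  -- P t V ≤ S_t * volume V
  set S : ℝ≥0∞ := ⨆ x' ∈ Metric.ball x ε, ENNReal.ofReal (p t x') with hSdef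
  have hPV : P t V ≤ S * volume V := by
    rw [hp_density t V hVmeas]
    calc ∫⁻ y in V, ENNReal.ofReal (p t y) ∂volume
        ≤ ∫⁻ _ in V, S ∂volume := by
          apply setLIntegral_mono' hVmeas
          intro y hy
          rw [hSdef]
          exact le_biSup (fun x' => ENNReal.ofReal (p t x')) hy.2
      _ = S * volume V := by rw [setLIntegral_const]
  -- conclude
  by_contra hS
  push_neg at hS
  have h1 : ENNReal.ofReal (c0 / 2) ≤ (n + 1) * volume V := by
    calc ENNReal.ofReal (c0 / 2) ≤ S * volume V := hPtV.trans hPV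
      _ ≤ (n : ℝ≥0∞) * volume V := mul_le_mul_left hS _
      _ ≤ (n + 1) * volume V := by
          apply mul_le_mul_left
          exact le_self_add
  have hV0 : volume V ≠ 0 := by
    intro h0
    have h3 := hPtV.trans hPV
    rw [h0, mul_zero, nonpos_iff_eq_zero, ENNReal.ofReal_eq_zero] at h3
    linarith
  have h2 : η ≤ volume V := by
    rw [hηdef, ENNReal.div_le_iff_le_mul (Or.inl (by simp)) (Or.inr hV0)]
    exact h1.trans (le_of_eq (mul_comm _ _))
  exact absurd hVvol (not_lt.mpr h2)
end

section
/- Let D ≥ 1 and let M ⊆ ℝ^D be a Borel set whose closure cl(M) satisfies λ_D(cl(M)) = 0. Let ℙ† be a Borel probability measure on ℝ^D with ℙ†(M) = 1 and supp(ℙ†) = cl(M). Let (ℙ_t)_{t=1}^∞ be Borel probability measures on ℝ^D with ℙ_t ≪ λ_D, with densities p_t, such that ℙ_t converges weakly to ℙ† as t → ∞. Then for λ_D-almost every x ∈ ℝ^D ∖ cl(M) the following holds: if the sequence (p_t(x))_{t=1}^∞ converges to some limit L ∈ [0,∞), then L = 0. (Corollary of the Likelihood Instability Theorem: whenever the pointwise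 limit of the densities exists off the closure of M, it must be zero almost everywhere.) -/
open MeasureTheory Filter Topology
open scoped ENNReal

/-- **Corollary of the Likelihood Instability Theorem.** Under the hypotheses of the
Likelihood Instability Theorem, for Lebesgue-almost every `x` outside `closure M`,
whenever the sequence `p t x` converges to some limit `L ∈ [0, ∞)`, that limit must
be zero. -/
theorem likelihood_instability_corollary
    {D : ℕ} (hD : 1 ≤ D)
    (M : Set (EuclideanSpace ℝ (Fin D))) (hM : MeasurableSet M)
    (hMnull : volume (closure M) = 0)
    (Pdag : Measure (EuclideanSpace ℝ (Fin D))) [IsProbabilityMeasure Pdag]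
    (hPdagM : Pdag M = 1)
    (hsupp : msupport Pdag = closure M)
    (P : ℕ → Measure (EuclideanSpace ℝ (Fin D)))
    (hPprob : ∀ t, IsProbabilityMeasure (P t))
    (hPac : ∀ t, P t ≪ volume)
    (p : ℕ → EuclideanSpace ℝ (Fin D) → ℝ)
    (hp_nonneg : ∀ t x, 0 ≤ p t x)
    (hp_meas : ∀ t, Measurable (p t))
    (hp_density : ∀ t, ∀ A : Set (EuclideanSpace ℝ (Fin D)), MeasurableSet A →
        P t A = ∫⁻ x in A, ENNReal.ofReal (p t x) ∂volume)
    (hweak : ∀ h : BoundedContinuousFunction (EuclideanSpace ℝ (Fin D)) ℝ,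
        Tendsto (fun t => ∫ x, h x ∂(P t)) atTop (𝓝 (∫ x, h x ∂Pdag))) :
    ∀ᵐ x ∂volume, x ∉ closure M →
      ∀ L : ℝ, 0 ≤ L → Tendsto (fun t => p t x) atTop (𝓝 L) → L = 0 := by
  -- M is nonempty
  have hMne : M.Nonempty := by
    rcases M.eq_empty_or_nonempty with h | h
    · rw [h] at hPdagM; simp at hPdagM
    · exact h
  have hclne : (closure M).Nonempty := hMne.closure
  -- Pdag gives full measure to closure M
  have hPdagcl : Pdag (closure M) = 1 :=
    le_antisymm prob_le_one (hPdagM ▸ measure_mono subset_closure)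
  -- weak convergence as ProbabilityMeasure
  haveI := fun t => hPprob t
  let Q : ℕ → ProbabilityMeasure (EuclideanSpace ℝ (Fin D)) := fun t => ⟨P t, hPprob t⟩
  let Qd : ProbabilityMeasure (EuclideanSpace ℝ (Fin D)) := ⟨Pdag, inferInstance⟩
  have hQ : Tendsto Q atTop (𝓝 Qd) :=
    ProbabilityMeasure.tendsto_iff_forall_integral_tendsto.mpr hweak
  -- the closed sets F n
  set F : ℕ → Set (EuclideanSpace ℝ (Fin D)) :=
    fun n => {x | ((n : ℝ) + 1)⁻¹ ≤ Metric.infDist x (closure M)} with hF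
  have hFclosed : ∀ n, IsClosed (F n) :=
    fun n => isClosed_le continuous_const (Metric.continuous_infDist_pt _)
  have hFmeas : ∀ n, MeasurableSet (F n) := fun n => (hFclosed n).measurableSet
  have hFdisj : ∀ n, Pdag (F n) = 0 := by
    intro n
    have : F n ⊆ (closure M)ᶜ := by
      intro x hx hxc
      have h0 : Metric.infDist x (closure M) = 0 := Metric.infDist_zero_of_mem hxc
      have : ((n : ℝ) + 1)⁻¹ ≤ 0 := h0 ▸ hx
      have hpos : (0 : ℝ) < ((n : ℝ) + 1)⁻¹ := by positivity
      linarith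
    refine le_antisymm (le_trans (measure_mono this) ?_) zero_le
    have := prob_compl_eq_zero_iff (μ := Pdag) (isClosed_closure (s := M)).measurableSet
    rw [this.mpr hPdagcl]
  -- limsup of P t (F n) is 0
  have hlimsup : ∀ n, limsup (fun t => P t (F n)) atTop ≤ 0 := by
    intro n
    have := ProbabilityMeasure.limsup_measure_closed_le_of_tendsto hQ (hFclosed n)
    simpa [Q, Qd, hFdisj n] using this
  -- Fatou on each F n
  have hae : ∀ n, ∀ᵐ x ∂volume, x ∈ F n →
      liminf (fun t => ENNReal.ofReal (p t x)) atTop = 0 := by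
    intro n
    have hint : ∫⁻ x in F n, liminf (fun t => ENNReal.ofReal (p t x)) atTop ∂volume = 0 := by
      refine le_antisymm ?_ zero_le
      calc ∫⁻ x in F n, liminf (fun t => ENNReal.ofReal (p t x)) atTop ∂volume
          ≤ liminf (fun t => ∫⁻ x in F n, ENNReal.ofReal (p t x) ∂volume) atTop :=
            lintegral_liminf_le fun t => (hp_meas t).ennreal_ofReal
        _ = liminf (fun t => P t (F n)) atTop := by
            simp_rw [← hp_density _ _ (hFmeas n)]
        _ ≤ limsup (fun t => P t (F n)) atTop := liminf_le_limsup
        _ ≤ 0 := hlimsup n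
    have h0 := (lintegral_eq_zero_iff (by
      exact Measurable.liminf fun t => (hp_meas t).ennreal_ofReal)).mp hint
    exact (ae_restrict_iff' (hFmeas n)).mp h0
  -- combine
  rw [← ae_all_iff] at hae
  filter_upwards [hae] with x hx hxM L hL hlim
  -- find n with x ∈ F n
  have hpos : 0 < Metric.infDist x (closure M) :=
    (isClosed_closure.notMem_iff_infDist_pos hclne).mp hxM
  obtain ⟨n, hn⟩ := exists_nat_one_div_lt hpos
  have hxF : x ∈ F n := le_of_lt (by simpa [one_div] using hn)
  have hliminf := hx n hxF
  have htend : Tendsto (fun t => ENNReal.ofReal (p t x)) atTop (𝓝 (ENNReal.ofReal L)) :=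
    (ENNReal.continuous_ofReal.tendsto L).comp hlim
  rw [htend.liminf_eq] at hliminf
  have : L ≤ 0 := by simpa [ENNReal.ofReal_eq_zero] using hliminf
  linarith
end

section
/- Let D ≥ 1 and let M ⊆ ℝ^D be a Borel set whose closure cl(M) satisfies λ_D(cl(M)) = 0. Let ℙ† be a Borel probability measure on ℝ^D with ℙ†(M) = 1 and supp(ℙ†) = cl(M). Let (ℙ_t)_{t=1}^∞ be Borel probability measures on ℝ^D converging weakly to ℙ†, and suppose that for each t, ℙ_t admits a density p_t : ℝ^D → [0,∞) with respect to λ_D which is Lipschitz continuous with Lipschitz constant L_t ≥ 0. Then L_t → ∞ as t → ∞. (If a sequence of Lipschitz probability densities learns a distribution supported on a Lebesgue-null set, the Lipschitz constants must blow up.) -/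
open MeasureTheory Filter Topology
open scoped ENNReal

/-- If a sequence of probability measures with Lipschitz densities (with Lipschitz
constants `Lc t`) converges weakly to a distribution supported on a set whose closure is
Lebesgue-null, then the Lipschitz constants must blow up: `Lc t → ∞`. -/
theorem lipschitz_constants_blow_up
    {D : ℕ} (hD : 1 ≤ D)
    (M : Set (EuclideanSpace ℝ (Fin D))) (hM : MeasurableSet M)
    (hMnull : volume (closure M) = 0)
    (Pdag : Measure (EuclideanSpace ℝ (Fin D))) [IsProbabilityMeasure Pdag]
    (hPdagM : Pdag M = 1)
    (hsupp : msupport Pdag = closure M)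
    (P : ℕ → Measure (EuclideanSpace ℝ (Fin D)))
    (hPprob : ∀ t, IsProbabilityMeasure (P t))
    (p : ℕ → EuclideanSpace ℝ (Fin D) → ℝ)
    (hp_nonneg : ∀ t x, 0 ≤ p t x)
    (hp_density : ∀ t, ∀ A : Set (EuclideanSpace ℝ (Fin D)), MeasurableSet A →
        P t A = ∫⁻ x in A, ENNReal.ofReal (p t x) ∂volume)
    (Lc : ℕ → ℝ)
    (hLc_nonneg : ∀ t, 0 ≤ Lc t)
    (hLip : ∀ t, ∀ x y : EuclideanSpace ℝ (Fin D), |p t x - p t y| ≤ Lc t * ‖x - y‖)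
    (hweak : ∀ h : BoundedContinuousFunction (EuclideanSpace ℝ (Fin D)) ℝ,
        Tendsto (fun t => ∫ x, h x ∂(P t)) atTop (𝓝 (∫ x, h x ∂Pdag))) :
    Tendsto Lc atTop atTop := by
  classical
  haveI : Nonempty (Fin D) := Fin.pos_iff_nonempty.mp hD
  haveI : Nontrivial (EuclideanSpace ℝ (Fin D)) := inferInstance
  by_contra hcon
  rw [tendsto_atTop_atTop] at hcon
  push_neg at hcon
  obtain ⟨L₀, hL₀⟩ := hcon
  set L : ℝ := max L₀ 1 with hLdef
  have hL1 : (1:ℝ) ≤ L := le_max_right _ _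
  have hLpos : (0:ℝ) < L := lt_of_lt_of_le one_pos hL1
  have hfreq : ∃ᶠ t in atTop, Lc t ≤ L := by
    rw [frequently_atTop]
    intro i
    obtain ⟨a, hai, ha⟩ := hL₀ i
    exact ⟨a, hai, le_trans ha.le (le_max_left _ _)⟩
  -- volume of unit ball
  set κ : ℝ≥0∞ := volume (Metric.ball (0:EuclideanSpace ℝ (Fin D)) 1) with hκdef
  have hκpos : 0 < κ := Metric.measure_ball_pos _ _ one_pos
  have hκfin : κ ≠ ∞ := measure_ball_lt_top.ne
  set κr : ℝ := κ.toReal with hκrdef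
  have hκrpos : 0 < κr := ENNReal.toReal_pos hκpos.ne' hκfin
  -- the coefficient
  set c : ℝ := κr / (2 * (2*L)^D) with hcdef
  have hcpos : 0 < c := by
    apply div_pos hκrpos
    positivity
  -- find B with c * B^(D+1) > 1, B ≥ 1
  have htend : Tendsto (fun a : ℝ => c * a^(D+1)) atTop atTop := by
    exact (tendsto_pow_atTop (Nat.succ_ne_zero D)).const_mul_atTop hcpos
  obtain ⟨B, hB1, hBgt⟩ : ∃ B : ℝ, 1 ≤ B ∧ 1 < c * B^(D+1) := by
    have := ((htend.eventually_gt_atTop 1).and (eventually_ge_atTop (1:ℝ))).exists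
    obtain ⟨B, h1, h2⟩ := this
    exact ⟨B, h2, h1⟩
  have hBpos : 0 < B := lt_of_lt_of_le one_pos hB1
  -- uniform bound on densities when Lc t ≤ L
  have hbd : ∀ t, Lc t ≤ L → ∀ x : EuclideanSpace ℝ (Fin D), p t x ≤ B := by
    intro t ht x
    by_contra hgt
    push_neg at hgt
    set a : ℝ := p t x with hadef
    have hapos : 0 < a := lt_trans hBpos hgt
    set r : ℝ := a / (2*L) with hrdef
    have hrpos : 0 < r := div_pos hapos (by positivity)
    have hlow : ∀ y ∈ Metric.ball x r, ENNReal.ofReal (a/2) ≤ ENNReal.ofReal (p t y) := by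
      intro y hy
      apply ENNReal.ofReal_le_ofReal
      have h1 : |p t x - p t y| ≤ Lc t * ‖x - y‖ := hLip t x y
      have h2 : ‖x - y‖ < r := by
        rw [← dist_eq_norm]; rwa [Metric.mem_ball, dist_comm] at hy
      have h3 : Lc t * ‖x - y‖ ≤ L * r :=
        mul_le_mul ht h2.le (norm_nonneg _) hLpos.le
      have h4 : L * r = a / 2 := by
        rw [hrdef]; field_simp
      have := abs_le.mp h1 |>.1
      nlinarith [abs_le.mp h1 |>.1, abs_le.mp h1 |>.2]
    haveI := hPprob t
    have hPle : P t (Metric.ball x r) ≤ 1 := prob_le_one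
    have hPi : ENNReal.ofReal (a/2) * volume (Metric.ball x r) ≤ P t (Metric.ball x r) := by
      rw [hp_density t _ measurableSet_ball, ← setLIntegral_const]
      exact setLIntegral_mono' measurableSet_ball hlow
    have hvol : volume (Metric.ball x r) = ENNReal.ofReal (r^D) * κ := by
      have := Measure.addHaar_ball (μ := (volume : Measure (EuclideanSpace ℝ (Fin D)))) x hrpos.le
      rwa [finrank_euclideanSpace_fin] at this
    rw [hvol] at hPi
    have hle1 : ENNReal.ofReal (a/2) * (ENNReal.ofReal (r^D) * κ) ≤ 1 := hPi.trans hPle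
    have hreal : (a/2) * (r^D * κr) ≤ 1 := by
      have := ENNReal.toReal_mono (by simp) hle1
      rwa [ENNReal.toReal_mul, ENNReal.toReal_mul, ENNReal.toReal_ofReal (by positivity),
        ENNReal.toReal_ofReal (by positivity), ENNReal.toReal_one] at this
    have hid : (a/2) * (r^D * κr) = c * a^(D+1) := by
      rw [hrdef, hcdef, div_pow]
      field_simp
      ring
    rw [hid] at hreal
    have hmono : c * B^(D+1) ≤ c * a^(D+1) := by
      apply mul_le_mul_of_nonneg_left _ hcpos.le
      exact pow_le_pow_left₀ hBpos.le hgt.le _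
    linarith
  -- Pdag (closure M) = 1
  have hPdagCl : Pdag (closure M) = 1 :=
    le_antisymm prob_le_one (hPdagM ▸ measure_mono subset_closure)
  -- compact chunk
  have hUnion : ⋃ n : ℕ, (closure M ∩ Metric.closedBall (0:EuclideanSpace ℝ (Fin D)) n) = closure M := by
    rw [← Set.inter_iUnion]
    rw [Set.iUnion_eq_univ_iff.mpr, Set.inter_univ]
    intro x
    obtain ⟨n, hn⟩ := exists_nat_ge ‖x‖
    exact ⟨n, by simpa [Metric.mem_closedBall, dist_zero_right] using hn⟩
  have hmonoS : Monotone (fun n : ℕ => closure M ∩ Metric.closedBall (0:EuclideanSpace ℝ (Fin D)) n) := by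
    intro m n hmn
    exact Set.inter_subset_inter_right _ (Metric.closedBall_subset_closedBall (by exact_mod_cast hmn))
  have htendS : Tendsto (fun n : ℕ => Pdag (closure M ∩ Metric.closedBall (0:EuclideanSpace ℝ (Fin D)) n)) atTop
      (𝓝 (Pdag (closure M))) := by
    have := tendsto_measure_iUnion_atTop (μ := Pdag) hmonoS
    rwa [hUnion] at this
  have hhalf : ENNReal.ofReal (1/2) < Pdag (closure M) := by
    rw [hPdagCl]; exact ENNReal.ofReal_lt_one.mpr (by norm_num)
  obtain ⟨N, hN⟩ := (htendS.eventually (eventually_gt_nhds hhalf)).exists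
  set S : Set (EuclideanSpace ℝ (Fin D)) := closure M ∩ Metric.closedBall (0:EuclideanSpace ℝ (Fin D)) N with hSdef
  have hSclosed : IsClosed S := isClosed_closure.inter Metric.isClosed_closedBall
  have hSbd : Bornology.IsBounded S :=
    (Metric.isBounded_closedBall).subset Set.inter_subset_right
  have hSnull : volume S = 0 :=
    le_antisymm (hMnull ▸ measure_mono Set.inter_subset_left) zero_le
  -- thickening measure tends to 0
  have hthick : Tendsto (fun r => volume (Metric.thickening r S)) (𝓝[>] 0)
      (𝓝 (volume S)) := by
    have hfin : ∃ R > (0:ℝ), volume (Metric.thickening R S) ≠ ∞ :=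
      ⟨1, one_pos, (hSbd.thickening.measure_lt_top).ne⟩
    exact tendsto_measure_thickening_of_isClosed hfin hSclosed
  rw [hSnull] at hthick
  -- pick small eps
  have hδpos : (0:ℝ≥0∞) < ENNReal.ofReal (B⁻¹ * (1/4)) := by
    apply ENNReal.ofReal_pos.mpr; positivity
  obtain ⟨ε, hεpos, hεvol⟩ : ∃ ε > (0:ℝ),
      volume (Metric.thickening ε S) < ENNReal.ofReal (B⁻¹ * (1/4)) := by
    have h := hthick.eventually (eventually_lt_nhds hδpos) 
    obtain ⟨ε, hε1, hε2⟩ := (h.and self_mem_nhdsWithin).exists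
    exact ⟨ε, hε2, hε1⟩
  set U : Set (EuclideanSpace ℝ (Fin D)) := Metric.thickening ε S with hUdef
  have hUopen : IsOpen U := Metric.isOpen_thickening
  -- portmanteau
  set μs : ℕ → ProbabilityMeasure (EuclideanSpace ℝ (Fin D)) := fun t => ⟨P t, hPprob t⟩ with hμsdef
  set μ : ProbabilityMeasure (EuclideanSpace ℝ (Fin D)) := ⟨Pdag, inferInstance⟩ with hμdef
  have hμtend : Tendsto μs atTop (𝓝 μ) :=
    ProbabilityMeasure.tendsto_iff_forall_integral_tendsto.mpr hweak
  have hliminf : Pdag U ≤ atTop.liminf (fun t => P t U) :=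
    ProbabilityMeasure.le_liminf_measure_open_of_tendsto hμtend hUopen
  have hPdagU : ENNReal.ofReal (1/2) < Pdag U :=
    lt_of_lt_of_le hN (measure_mono (Metric.self_subset_thickening hεpos S))
  have hfreqU : ∃ᶠ t in atTop, P t U ≤ ENNReal.ofReal (1/4) := by
    refine hfreq.mono ?_
    intro t ht
    calc P t U = ∫⁻ x in U, ENNReal.ofReal (p t x) ∂volume :=
          hp_density t U hUopen.measurableSet
      _ ≤ ∫⁻ _x in U, ENNReal.ofReal B ∂volume :=
          setLIntegral_mono' hUopen.measurableSet
            (fun x _ => ENNReal.ofReal_le_ofReal (hbd t ht x))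
      _ = ENNReal.ofReal B * volume U := setLIntegral_const _ _
      _ ≤ ENNReal.ofReal B * ENNReal.ofReal (B⁻¹ * (1/4)) :=
          mul_le_mul_right hεvol.le _
      _ = ENNReal.ofReal (B * (B⁻¹ * (1/4))) := (ENNReal.ofReal_mul hBpos.le).symm
      _ = ENNReal.ofReal (1/4) := by
          rw [← mul_assoc, mul_inv_cancel₀ hBpos.ne', one_mul]
  have hliminf_le : atTop.liminf (fun t => P t U) ≤ ENNReal.ofReal (1/4) :=
    liminf_le_of_frequently_le' hfreqU
  have hcontra : ENNReal.ofReal (1/2) < ENNReal.ofReal (1/4) :=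
    lt_of_lt_of_le hPdagU (hliminf.trans hliminf_le)
  rw [ENNReal.ofReal_lt_ofReal_iff (by norm_num)] at hcontra
  linarith
end

section
/- Let M ⊆ ℝ^D be a Borel set, let ℙ† be a Borel probability measure on ℝ^D with ℙ†(M) = 1, and let (ℙ_t)_{t=1}^∞ be Borel probability measures on ℝ^D with ℙ_t ≪ λ_D and densities p_t, converging weakly to ℙ†. Let x ∈ ℝ^D and ε > 0 be such that ℙ†(∂B_ε(x)) = 0. Then for every δ > 0, with M_δ the open δ-thickening of M, the inequality ℙ†(B_ε(x)) ≤ λ_D(M_δ ∩ B_ε(x)) · liminf_{t→∞} sup_{x' ∈ B_ε(x)} p_t(x') holds in [0, ∞] (with the convention 0 · ∞ = 0). -/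
open MeasureTheory Filter Topology
open scoped ENNReal

set_option maxHeartbeats 1000000 in
/-- Key inequality in the proof of the Likelihood Instability Theorem: if `P t` are
Borel probability measures with densities `p t` converging weakly to `Pdag` with
`Pdag M = 1`, and `B ε x` is a continuity set of `Pdag`, then for every `δ > 0`,
`Pdag (ball x ε) ≤ volume (thickening δ M ∩ ball x ε) * liminf_t sup_{B ε x} p t`,
the inequality being in `[0, ∞]` (with the convention `0 * ∞ = 0`). -/
theorem key_wasserstein_inequality
    {D : ℕ} (hD : 1 ≤ D)
    (M : Set (EuclideanSpace ℝ (Fin D))) (hM : MeasurableSet M)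
    (Pdag : Measure (EuclideanSpace ℝ (Fin D))) [IsProbabilityMeasure Pdag]
    (hPdagM : Pdag M = 1)
    (P : ℕ → Measure (EuclideanSpace ℝ (Fin D)))
    (hPprob : ∀ t, IsProbabilityMeasure (P t))
    (hPac : ∀ t, P t ≪ volume)
    (p : ℕ → EuclideanSpace ℝ (Fin D) → ℝ)
    (hp_nonneg : ∀ t x, 0 ≤ p t x)
    (hp_meas : ∀ t, Measurable (p t))
    (hp_density : ∀ t, ∀ A : Set (EuclideanSpace ℝ (Fin D)), MeasurableSet A →
        P t A = ∫⁻ x in A, ENNReal.ofReal (p t x) ∂volume)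
    (hweak : ∀ h : BoundedContinuousFunction (EuclideanSpace ℝ (Fin D)) ℝ,
        Tendsto (fun t => ∫ x, h x ∂(P t)) atTop (𝓝 (∫ x, h x ∂Pdag)))
    (x : EuclideanSpace ℝ (Fin D)) (ε : ℝ) (hε : 0 < ε)
    (hcont : Pdag (frontier (Metric.ball x ε)) = 0) :
    ∀ δ : ℝ, 0 < δ →
      Pdag (Metric.ball x ε) ≤
        volume (Metric.thickening δ M ∩ Metric.ball x ε) *
          liminf (fun t => ⨆ x' ∈ Metric.ball x ε, ENNReal.ofReal (p t x')) atTop := by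
  intro δ hδ
  set B : Set (EuclideanSpace ℝ (Fin D)) := Metric.ball x ε with hB
  set T : Set (EuclideanSpace ℝ (Fin D)) := Metric.thickening δ M with hT
  set S : ℕ → ℝ≥0∞ := fun t => ⨆ x' ∈ B, ENNReal.ofReal (p t x') with hS
  set V : ℝ≥0∞ := volume (T ∩ B) with hV
  haveI := hPprob
  -- weak convergence as `ProbabilityMeasure` convergence
  set μs : ℕ → ProbabilityMeasure (EuclideanSpace ℝ (Fin D)) :=
    fun t => ⟨P t, hPprob t⟩ with hμs
  set μ : ProbabilityMeasure (EuclideanSpace ℝ (Fin D)) := ⟨Pdag, inferInstance⟩ with hμ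
  have hlim : Tendsto μs atTop (𝓝 μ) :=
    ProbabilityMeasure.tendsto_iff_forall_integral_tendsto.mpr hweak
  -- portmanteau: convergence on the continuity set B
  have h1 : Tendsto (fun t => P t B) atTop (𝓝 (Pdag B)) := by
    exact ProbabilityMeasure.tendsto_measure_of_null_frontier_of_tendsto' hlim hcont
  -- Pdag T = 1, hence Pdag Tᶜ = 0
  have hPdagT : Pdag T = 1 := le_antisymm prob_le_one
    (hPdagM ▸ measure_mono (Metric.self_subset_thickening hδ M))
  have hTopen : IsOpen T := Metric.isOpen_thickening
  have hTmeas : MeasurableSet T := hTopen.measurableSet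
  have hTc : Pdag Tᶜ = 0 := by
    rw [measure_compl hTmeas (measure_ne_top _ _), hPdagT, measure_univ, tsub_self]
  -- limsup of P t Tᶜ is 0
  have h3 : limsup (fun t => P t Tᶜ) atTop = 0 := by
    have h : limsup (fun t => P t Tᶜ) atTop ≤ Pdag Tᶜ := by
      exact ProbabilityMeasure.limsup_measure_closed_le_of_tendsto hlim
        (isClosed_compl_iff.mpr hTopen)
    rw [hTc] at h
    exact le_antisymm h zero_le
  -- pointwise bound: P t (T ∩ B) ≤ V * S t
  have hkey : ∀ t, P t (T ∩ B) ≤ V * S t := by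
    intro t
    rw [hp_density t _ (hTmeas.inter measurableSet_ball)]
    calc ∫⁻ y in T ∩ B, ENNReal.ofReal (p t y) ∂volume
        ≤ ∫⁻ _ in T ∩ B, S t ∂volume := by
          refine setLIntegral_mono measurable_const fun y hy => ?_
          exact le_biSup (fun x' => ENNReal.ofReal (p t x')) hy.2
      _ = V * S t := by rw [setLIntegral_const, mul_comm]
  -- B ⊆ Tᶜ ∪ (T ∩ B)
  have hsub : ∀ t, P t B ≤ P t Tᶜ + P t (T ∩ B) := fun t =>
    le_trans (measure_mono (fun y hy => by
      by_cases hyT : y ∈ T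
      · exact Or.inr ⟨hyT, hy⟩
      · exact Or.inl hyT)) (measure_union_le _ _)
  -- assemble
  have h3' : Tendsto (fun t => P t Tᶜ) atTop (𝓝 0) := by
    refine tendsto_of_liminf_eq_limsup ?_ h3
    exact le_antisymm (le_trans liminf_le_limsup (le_of_eq h3)) zero_le
  have hdiff : Tendsto (fun t => P t B - P t Tᶜ) atTop (𝓝 (Pdag B)) := by
    have := ENNReal.Tendsto.sub h1 h3' (Or.inr (by simp))
    simpa using this
  have step1 : Pdag B ≤ liminf (fun t => P t (T ∩ B)) atTop := by
    rw [← hdiff.liminf_eq]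
    refine liminf_le_liminf (Eventually.of_forall fun t => ?_)
    exact tsub_le_iff_right.mpr ((hsub t).trans (by rw [add_comm]))
  have step2 : liminf (fun t => P t (T ∩ B)) atTop ≤ V * liminf S atTop := by
    by_cases hV0 : V = 0
    · have : ∀ t, P t (T ∩ B) = 0 := by
        intro t
        rw [hp_density t _ (hTmeas.inter measurableSet_ball)]
        rw [Measure.restrict_eq_zero.mpr hV0]
        simp
      simp only [this]
      simp
    · have hVtop : V ≠ ∞ := by
        have : V ≤ volume B := measure_mono Set.inter_subset_right
        exact ne_top_of_le_ne_top (measure_ball_lt_top.ne) this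
      have hmono : liminf (fun t => P t (T ∩ B)) atTop ≤
          liminf ((fun _ => V) * S) atTop :=
        liminf_le_liminf (Eventually.of_forall hkey)
      refine hmono.trans ?_
      have := ENNReal.liminf_mul_le (f := (atTop : Filter ℕ)) (u := fun _ : ℕ => V) (v := S)
        (Or.inl (by rwa [limsup_const])) (Or.inl (by rwa [limsup_const]))
      rwa [limsup_const] at this
  exact step1.trans step2
end

section
/- Let μ be a Borel probability measure on ℝ^D, let g : ℝ^d → ℝ^D be Borel measurable, and let c : ℝ^D × ℝ^D → ℝ be Borel measurable such that there exists C > 0 with sup_{(x,y) ∈ ℝ^D × ℝ^D} |c(x,y)| < C. Then the infimum over all Borel measurable functions f : ℝ^D → ℝ^d of ∫ c(x, g(f(x))) dμ(x) equals the infimum over all continuous functions f : ℝ^D → ℝ^d of ∫ c(x, g(f(x))) dμ(x). -/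
open MeasureTheory Filter Topology Metric Set
open scoped ENNReal NNReal BoundedContinuousFunction

/-- Lusin's theorem for Euclidean spaces: a measurable function agrees with a continuous
function off a set of arbitrarily small measure. -/
lemma lusin_euclidean {D d : ℕ} (μ : Measure (EuclideanSpace ℝ (Fin D)))
    [IsFiniteMeasure μ]
    (f : EuclideanSpace ℝ (Fin D) → EuclideanSpace ℝ (Fin d)) (hf : Measurable f)
    {ε : ℝ≥0∞} (hε : ε ≠ 0) :
    ∃ f' : EuclideanSpace ℝ (Fin D) → EuclideanSpace ℝ (Fin d),
      Continuous f' ∧ μ {x | f' x ≠ f x} ≤ ε := by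
  rcases eq_or_ne ε ⊤ with rfl | hεtop
  · exact ⟨fun _ => 0, continuous_const, le_top⟩
  let E := EuclideanSpace ℝ (Fin d)
  let X := EuclideanSpace ℝ (Fin D)
  let T : E ≃ₜ ball (0 : E) 1 := Homeomorph.unitBall
  set F : X → E := fun x => (T (f x) : E) with hFdef
  have hFm : Measurable F := (continuous_subtype_val.comp T.continuous).measurable.comp hf
  have hFb : ∀ x, ‖F x‖ ≤ 1 := fun x => le_of_lt (mem_ball_zero_iff.mp (T (f x)).2)
  have hFi : Integrable F μ :=
    (integrable_const (1:ℝ)).mono' hFm.aestronglyMeasurable (Eventually.of_forall hFb)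
  have hseq : ∀ n : ℕ, ∃ g : X →ᵇ E,
      (∫⁻ x, ‖F x - g x‖₊ ∂μ) ≤ ((n:ℝ≥0∞)+1)⁻¹ ∧ Integrable g μ := fun n =>
    hFi.exists_boundedContinuous_lintegral_sub_le (by simp)
  choose g hg hgi using hseq
  have htim : TendstoInMeasure μ (fun n => (g n : X → E)) atTop F := by
    apply tendstoInMeasure_of_tendsto_eLpNorm (p := 1) one_ne_zero
      (fun n => (g n).continuous.aestronglyMeasurable) hFm.aestronglyMeasurable
    have hle : ∀ n, eLpNorm ((g n : X → E) - F) 1 μ ≤ ((n:ℝ≥0∞)+1)⁻¹ := by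
      intro n
      rw [eLpNorm_sub_comm, eLpNorm_one_eq_lintegral_enorm]
      simpa [enorm_eq_nnnorm] using hg n
    have h0 : Tendsto (fun n : ℕ => ((n:ℝ≥0∞)+1)⁻¹) atTop (𝓝 0) := by
      have := ENNReal.tendsto_inv_nat_nhds_zero.comp (tendsto_add_atTop_nat 1)
      refine this.congr fun n => ?_
      push_cast [Function.comp]
      ring_nf
    exact tendsto_of_tendsto_of_tendsto_of_le_of_le tendsto_const_nhds h0
      (fun n => zero_le) hle
  obtain ⟨ns, hns_mono, hae⟩ := htim.exists_seq_tendsto_ae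
  have hεd : ε / 2 ≠ 0 := by simp [ENNReal.div_eq_zero_iff, hε]
  have h2top : ε / 2 ≠ ⊤ := ne_top_of_le_ne_top hεtop ENNReal.half_le_self
  have hr : (0:ℝ) < (ε/2).toReal := ENNReal.toReal_pos hεd h2top
  obtain ⟨t, htm, htμ, htu⟩ := tendstoUniformlyOn_of_ae_tendsto'
      (f := fun i => (g (ns i) : X → E)) (g := F)
      (fun i => (g (ns i)).continuous.stronglyMeasurable) hFm.stronglyMeasurable hae hr
  obtain ⟨K, hKt, hKc, hKμ⟩ := htm.compl.exists_isClosed_diff_lt (measure_ne_top μ _) hεd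
  have hFc : ContinuousOn F K :=
    (htu.mono hKt).continuousOn
      (Frequently.of_forall fun i => (g (ns i)).continuous.continuousOn)
  have h1 : ∀ x, F x ∈ ball (0 : E) 1 := fun x => (T (f x)).2
  have h2 : ∀ x, f x = T.symm ⟨F x, h1 x⟩ := by
    intro x
    rw [show (⟨F x, h1 x⟩ : ball (0:E) 1) = T (f x) from Subtype.ext rfl, T.symm_apply_apply]
  have hfK : ContinuousOn f K := by
    have hc1 : ContinuousOn (fun x => (T.symm ⟨F x, h1 x⟩ : E)) K := by
      apply Homeomorph.continuous T.symm |>.comp_continuousOn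
      rw [continuousOn_iff_continuous_restrict] at hFc ⊢
      exact hFc.subtype_mk _
    have heq : (fun x => (T.symm ⟨F x, h1 x⟩ : E)) = f := funext fun x => (h2 x).symm
    rwa [heq] at hc1
  obtain ⟨G, hG⟩ := ContinuousMap.exists_restrict_eq (Y := E) hKc
      ⟨K.restrict f, continuousOn_iff_continuous_restrict.mp hfK⟩
  refine ⟨G, G.continuous, ?_⟩
  have hGf : ∀ x (hx : x ∈ K), G x = f x := fun x hx =>
    congrFun (congrArg DFunLike.coe hG) ⟨x, hx⟩
  have hsub : {x | G x ≠ f x} ⊆ t ∪ (tᶜ \ K) := by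
    intro x hx
    by_cases hxt : x ∈ t
    · exact Or.inl hxt
    · exact Or.inr ⟨hxt, fun hxK => hx (hGf x hxK)⟩
  calc μ {x | G x ≠ f x} ≤ μ (t ∪ (tᶜ \ K)) := measure_mono hsub
    _ ≤ μ t + μ (tᶜ \ K) := measure_union_le _ _
    _ ≤ ε/2 + ε/2 := add_le_add (htμ.trans (by rw [ENNReal.ofReal_toReal h2top]))
        hKμ.le
    _ = ε := ENNReal.add_halves ε


/-- For a Borel probability measure `μ` on `ℝ^D`, a Borel measurable `g : ℝ^d → ℝ^D`,
and a bounded Borel measurable cost `c : ℝ^D × ℝ^D → ℝ`, the infimum of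
`∫ c (x, g (f x)) dμ` over all Borel measurable `f : ℝ^D → ℝ^d` equals the infimum over
all continuous `f : ℝ^D → ℝ^d`. -/
theorem inf_over_measurable_eq_inf_over_continuous
    {D d : ℕ} (hD : 1 ≤ D) (hd : 1 ≤ d)
    (μ : Measure (EuclideanSpace ℝ (Fin D))) [IsProbabilityMeasure μ]
    (g : EuclideanSpace ℝ (Fin d) → EuclideanSpace ℝ (Fin D)) (hg : Measurable g)
    (c : EuclideanSpace ℝ (Fin D) × EuclideanSpace ℝ (Fin D) → ℝ) (hc : Measurable c)
    (C : ℝ) (hC : 0 < C)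
    (hbound : ∀ z : EuclideanSpace ℝ (Fin D) × EuclideanSpace ℝ (Fin D), |c z| < C) :
    (⨅ f : {f : EuclideanSpace ℝ (Fin D) → EuclideanSpace ℝ (Fin d) // Measurable f},
        ∫ x, c (x, g (f.1 x)) ∂μ)
      = ⨅ f : {f : EuclideanSpace ℝ (Fin D) → EuclideanSpace ℝ (Fin d) // Continuous f},
        ∫ x, c (x, g (f.1 x)) ∂μ := by
  have hint : ∀ (f : EuclideanSpace ℝ (Fin D) → EuclideanSpace ℝ (Fin d)), Measurable f →
      Integrable (fun x => c (x, g (f x))) μ := fun f hf =>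
    (integrable_const C).mono'
      ((hc.comp (measurable_id.prodMk (hg.comp hf))).aestronglyMeasurable)
      (Eventually.of_forall fun x => by
        simpa [Real.norm_eq_abs] using (hbound (x, g (f x))).le)
  have hlb : ∀ (f : EuclideanSpace ℝ (Fin D) → EuclideanSpace ℝ (Fin d)), Measurable f →
      -C ≤ ∫ x, c (x, g (f x)) ∂μ := by
    intro f hf
    have h1 : ∫ _x, (-C : ℝ) ∂μ ≤ ∫ x, c (x, g (f x)) ∂μ :=
      integral_mono (integrable_const _) (hint f hf)
        (fun x => (abs_lt.mp (hbound (x, g (f x)))).1.le)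
    simpa using h1
  have hbddm : BddBelow (Set.range
      (fun f : {f : EuclideanSpace ℝ (Fin D) → EuclideanSpace ℝ (Fin d) // Measurable f} =>
        ∫ x, c (x, g (f.1 x)) ∂μ)) := by
    refine ⟨-C, ?_⟩
    rintro _ ⟨f, rfl⟩
    exact hlb f.1 f.2
  have hbddc : BddBelow (Set.range
      (fun f : {f : EuclideanSpace ℝ (Fin D) → EuclideanSpace ℝ (Fin d) // Continuous f} =>
        ∫ x, c (x, g (f.1 x)) ∂μ)) := by
    refine ⟨-C, ?_⟩
    rintro _ ⟨f, rfl⟩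
    exact hlb f.1 f.2.measurable
  have : Nonempty {f : EuclideanSpace ℝ (Fin D) → EuclideanSpace ℝ (Fin d) // Continuous f} :=
    ⟨⟨fun _ => 0, continuous_const⟩⟩
  have : Nonempty {f : EuclideanSpace ℝ (Fin D) → EuclideanSpace ℝ (Fin d) // Measurable f} :=
    ⟨⟨fun _ => 0, measurable_const⟩⟩
  refine le_antisymm (le_ciInf fun fc => ciInf_le hbddm ⟨fc.1, fc.2.measurable⟩)
    (le_ciInf fun fm => ?_)
  refine le_of_forall_pos_le_add fun ε hε => ?_
  have hεC : (0:ℝ) < ε / (2*C) := by positivity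
  obtain ⟨f', hf'c, hf'μ⟩ := lusin_euclidean μ fm.1 fm.2
      (ε := ENNReal.ofReal (ε/(2*C))) ((ENNReal.ofReal_pos.mpr hεC).ne')
  have key : ∫ x, c (x, g (f' x)) ∂μ ≤ ∫ x, c (x, g (fm.1 x)) ∂μ + ε := by
    set u : EuclideanSpace ℝ (Fin D) → ℝ := fun x => c (x, g (f' x)) with hu
    set v : EuclideanSpace ℝ (Fin D) → ℝ := fun x => c (x, g (fm.1 x)) with hv
    have hui : Integrable u μ := hint f' hf'c.measurable
    have hvi : Integrable v μ := hint fm.1 fm.2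
    set s : Set (EuclideanSpace ℝ (Fin D)) := {x | f' x ≠ fm.1 x} with hs
    have hsm : MeasurableSet s := by
      have : MeasurableSet {x | f' x = fm.1 x} :=
        measurableSet_eq_fun hf'c.measurable fm.2
      simpa [hs, Set.compl_setOf] using this.compl
    have hpt : ∀ x, |u x - v x| ≤ s.indicator (fun _ => 2*C) x := by
      intro x
      by_cases hxs : x ∈ s
      · rw [Set.indicator_of_mem hxs]
        have h1 := abs_lt.mp (hbound (x, g (f' x)))
        have h2 := abs_lt.mp (hbound (x, g (fm.1 x)))
        rw [abs_le]
        constructor <;> simp only [hu, hv] <;>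
          linarith [h1.1, h1.2, h2.1, h2.2]
      · have hxe : f' x = fm.1 x := not_not.mp hxs
        rw [Set.indicator_of_notMem hxs]
        simp [hu, hv, hxe]
    have habs : |∫ x, u x ∂μ - ∫ x, v x ∂μ| ≤ ∫ x, s.indicator (fun _ => 2*C) x ∂μ := by
      rw [← integral_sub hui hvi]
      have hni := norm_integral_le_integral_norm (fun x => u x - v x) (μ := μ)
      simp only [Real.norm_eq_abs] at hni
      refine hni.trans ?_
      exact integral_mono (hui.sub hvi).abs
        ((integrable_const (2*C)).indicator hsm) hpt
    have hind : ∫ x, s.indicator (fun _ => 2*C) x ∂μ ≤ ε := by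
      rw [integral_indicator_const _ hsm]
      have hts : (μ s).toReal ≤ ε/(2*C) :=
        ENNReal.toReal_le_of_le_ofReal hεC.le hf'μ
      calc (μ s).toReal • (2*C) = (μ s).toReal * (2*C) := by rw [smul_eq_mul]
        _ ≤ (ε/(2*C)) * (2*C) := by
            apply mul_le_mul_of_nonneg_right hts (by positivity)
        _ = ε := by field_simp
    have := (abs_le.mp (habs.trans hind)).2
    linarith [this]
  exact (ciInf_le hbddc ⟨f', hf'c⟩).trans key
end
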